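/- Let B be a unital C*-algebra, A ⊆ B a complex linear subspace, and x ∈ A. Then a * x * c ∈ A for all a, c ∈ A if and only if for every y ∈ B with star y ∈ A and ‖y‖ ≤ 1, there exists z ∈ B with a * z ∈ A for all a ∈ A, such that condition C(x, y, z) holds. -/

import Mathlib

/-- The canonical C*-matrix norm on matrices over a C*-algebra `A`, obtained by viewing an
`m × n` matrix as an operator between the Hilbert C*-modules `A^n` and `A^m` (as in
Mathlib's `CStarMatrix`).  For square matrices this is the unique C*-algebra norm. -/
noncomputable def cstarMatrixNorm {A : Type*} [NonUnitalNormedRing A] [StarRing A]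
    {m n : ℕ} (M : Matrix (Fin m) (Fin n) A) : ℝ :=
  sSup {r : ℝ | ∃ v : Fin n → A, ‖∑ i, star (v i) * v i‖ ≤ 1 ∧
    r = Real.sqrt ‖∑ j, star (M.mulVec v j) * M.mulVec v j‖}

/-- Condition C(x, y, z) of Section 6: for every `b ∈ B`, the 2×4 matrix over `B` with rows
`(0, y, 1, 0)` and `(2·1, x, z, b)` has the same norm as the row matrix `(2·1, x, z, b)`. -/
def CondC {B : Type*} [NormedRing B] [StarRing B] (x y z : B) : Prop :=
  ∀ b : B, cstarMatrixNorm !![0, y, 1, 0; 2, x, z, b] = cstarMatrixNorm !![(2 : B), x, z, b]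

namespace QM

variable {B : Type*} [CStarAlgebra B] [PartialOrder B] [StarOrderedRing B] {n m : ℕ}

/-- The `B`-valued inner product on `Fin n → B`. -/
def ip (v w : Fin n → B) : B := ∑ i, star (v i) * w i

lemma ip_self_nonneg (v : Fin n → B) : 0 ≤ ip v v :=
  Finset.sum_nonneg fun i _ => star_mul_self_nonneg (v i)

lemma isSelfAdjoint_ip_self (v : Fin n → B) : IsSelfAdjoint (ip v v) :=
  IsSelfAdjoint.of_nonneg (ip_self_nonneg v)

private def toMod (v : Fin n → B) : WithCStarModule B (∀ _ : Fin n, B) :=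
  (WithCStarModule.equiv _ _).symm (fun i => star (v i))

private lemma inner_toMod (v w : Fin n → B) :
    inner (𝕜 := B) (toMod v) (toMod w) = ip w v := by
  simp [toMod, ip, WithCStarModule.pi_inner, WithCStarModule.inner_def]

private lemma norm_toMod (v : Fin n → B) : ‖toMod v‖ = Real.sqrt ‖ip v v‖ := by
  rw [CStarModule.norm_eq_sqrt_norm_inner_self (A := B), inner_toMod]

/-- operator-valued Cauchy–Schwarz -/
lemma star_ip (v w : Fin n → B) : star (ip v w) = ip w v := by
  simp [ip, star_sum, mul_comm]

lemma cs_op (v w : Fin n → B) :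
    star (ip v w) * ip v w ≤ ‖ip v v‖ • ip w w := by
  have h := CStarModule.inner_mul_inner_swap_le (A := B) (x := toMod v) (y := toMod w)
  rw [inner_toMod, inner_toMod, inner_toMod] at h
  rw [star_ip]
  calc ip w v * ip v w ≤ ‖toMod v‖ ^ 2 • ip w w := h
    _ = ‖ip v v‖ • ip w w := by
        rw [norm_toMod, Real.sq_sqrt (norm_nonneg _)]

/-- norm Cauchy–Schwarz -/
lemma cs_norm (v w : Fin n → B) :
    ‖ip v w‖ ≤ Real.sqrt ‖ip v v‖ * Real.sqrt ‖ip w w‖ := by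
  have h := CStarModule.norm_inner_le (A := B) (x := toMod v) (y := toMod w)
    (WithCStarModule B (∀ _ : Fin n, B))
  rwa [inner_toMod, ← star_ip, norm_star, norm_toMod, norm_toMod] at h

end QM

namespace QM

variable {B : Type*} [CStarAlgebra B] [PartialOrder B] [StarOrderedRing B] {n m : ℕ}

/-- The defining set of `cstarMatrixNorm`. -/
def SM (M : Matrix (Fin m) (Fin n) B) : Set ℝ :=
  {r : ℝ | ∃ v : Fin n → B, ‖ip v v‖ ≤ 1 ∧
    r = Real.sqrt ‖ip (M.mulVec v) (M.mulVec v)‖}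

lemma cstarMatrixNorm_eq (M : Matrix (Fin m) (Fin n) B) :
    cstarMatrixNorm M = sSup (SM M) := rfl

lemma zero_mem_SM (M : Matrix (Fin m) (Fin n) B) : (0 : ℝ) ∈ SM M := by
  refine ⟨0, by simp [ip], ?_⟩
  simp [ip, Matrix.mulVec_zero]

lemma norm_single_le_ip (v : Fin n → B) (i : Fin n) : ‖v i‖ ^ 2 ≤ ‖ip v v‖ := by
  rw [sq, ← CStarRing.norm_star_mul_self]
  refine CStarAlgebra.norm_le_norm_of_nonneg_of_le (star_mul_self_nonneg (v i)) ?_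
  exact Finset.single_le_sum (f := fun j => star (v j) * v j)
    (fun j _ => star_mul_self_nonneg (v j)) (Finset.mem_univ i)

lemma ip_norm_le (u : Fin m → B) : ‖ip u u‖ ≤ ∑ j, ‖u j‖ ^ 2 := by
  rw [ip]
  refine (norm_sum_le _ _).trans ?_
  refine Finset.sum_le_sum fun j _ => ?_
  rw [CStarRing.norm_star_mul_self, sq]


lemma bddAbove_SM (M : Matrix (Fin m) (Fin n) B) : BddAbove (SM M) := by
  refine ⟨Real.sqrt (∑ j, (∑ i, ‖M j i‖) ^ 2), ?_⟩
  rintro r ⟨v, hv, rfl⟩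
  refine Real.sqrt_le_sqrt ?_
  refine (ip_norm_le _).trans ?_
  refine Finset.sum_le_sum fun j _ => ?_
  have hvi : ∀ i, ‖v i‖ ≤ 1 := fun i => by
    have := (norm_single_le_ip v i).trans hv
    nlinarith [norm_nonneg (v i)]
  have h1 : ‖M.mulVec v j‖ ≤ ∑ i, ‖M j i‖ := by
    have hdef : M.mulVec v j = ∑ i, M j i * v i := rfl
    rw [hdef]
    refine (norm_sum_le _ _).trans ?_
    refine Finset.sum_le_sum fun i _ => ?_
    calc ‖M j i * v i‖ ≤ ‖M j i‖ * ‖v i‖ := norm_mul_le _ _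
      _ ≤ ‖M j i‖ * 1 := by gcongr; exact hvi i
      _ = ‖M j i‖ := mul_one _
  have h2 : (0:ℝ) ≤ ∑ i, ‖M j i‖ := Finset.sum_nonneg fun i _ => norm_nonneg _
  exact pow_le_pow_left₀ (norm_nonneg _) h1 2

lemma le_cstarMatrixNorm (M : Matrix (Fin m) (Fin n) B) (v : Fin n → B)
    (hv : ‖ip v v‖ ≤ 1) :
    Real.sqrt ‖ip (M.mulVec v) (M.mulVec v)‖ ≤ cstarMatrixNorm M :=
  le_csSup (bddAbove_SM M) ⟨v, hv, rfl⟩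

lemma cstarMatrixNorm_le (M : Matrix (Fin m) (Fin n) B) {K : ℝ}
    (h : ∀ v : Fin n → B, ‖ip v v‖ ≤ 1 → ‖ip (M.mulVec v) (M.mulVec v)‖ ≤ K) :
    cstarMatrixNorm M ≤ Real.sqrt K := by
  rw [cstarMatrixNorm_eq]
  refine csSup_le ⟨0, zero_mem_SM M⟩ ?_
  rintro r ⟨v, hv, rfl⟩
  exact Real.sqrt_le_sqrt (h v hv)

lemma eq_zero_of_ip_self_eq_zero {v : Fin n → B} (hv : ‖ip v v‖ = 0) : v = 0 := by
  funext i
  have := norm_single_le_ip v i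
  rw [hv] at this
  have : ‖v i‖ = 0 := by nlinarith [norm_nonneg (v i)]
  simpa using this

lemma ip_smul (r : ℝ) (v w : Fin n → B) : ip (r • v) (r • w) = (r * r) • ip v w := by
  simp only [ip, Finset.smul_sum]
  refine Finset.sum_congr rfl fun i _ => ?_
  simp only [Pi.smul_apply, star_smul, star_trivial, smul_mul_smul_comm]


lemma mulVec_smul' (M : Matrix (Fin m) (Fin n) B) (r : ℝ) (v : Fin n → B) :
    M.mulVec (r • v) = r • M.mulVec v := by
  funext j
  simp only [Matrix.mulVec, dotProduct, Pi.smul_apply, Finset.smul_sum]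
  exact Finset.sum_congr rfl fun i _ => mul_smul_comm r _ _

/-- Global scaled bound from a bound on the matrix norm. -/
lemma ip_mulVec_le_of_norm_le (M : Matrix (Fin m) (Fin n) B) {μ : ℝ} (hμ : 0 ≤ μ)
    (h : cstarMatrixNorm M ≤ Real.sqrt μ) (v : Fin n → B) :
    ‖ip (M.mulVec v) (M.mulVec v)‖ ≤ μ * ‖ip v v‖ := by
  set s := ‖ip v v‖ with hs
  rcases eq_or_lt_of_le (norm_nonneg (ip v v)) with h0 | hpos
  · have hv0 : v = 0 := eq_zero_of_ip_self_eq_zero h0.symm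
    subst hv0
    simp only [Matrix.mulVec_zero]
    have : ip (0 : Fin m → B) 0 = 0 := by simp [ip]
    rw [this, norm_zero]
    positivity
  · set w := (Real.sqrt s)⁻¹ • v with hw
    have hsq : Real.sqrt s > 0 := Real.sqrt_pos.mpr hpos
    have hipw : ip w w = s⁻¹ • ip v v := by
      rw [hw, ip_smul, ← Real.sqrt_mul_self (le_of_lt hsq) ]
      congr 1
      field_simp
      rw [Real.sqrt_sq hsq.le, Real.sq_sqrt (le_of_lt hpos : 0 ≤ s), div_self (hpos.ne' : s ≠ 0)]
    have hnw : ‖ip w w‖ = 1 := by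
      rw [hipw, norm_smul, Real.norm_eq_abs, abs_of_nonneg (inv_nonneg.mpr (le_of_lt hpos)),
        ← hs]
      field_simp
      exact div_self (hpos.ne' : s ≠ 0)
    have h1 := (le_cstarMatrixNorm M w (le_of_eq hnw)).trans h
    have h2 : ‖ip (M.mulVec w) (M.mulVec w)‖ ≤ μ := by
      have := Real.sqrt_le_sqrt_iff (x := ‖ip (M.mulVec w) (M.mulVec w)‖) hμ
      nlinarith [Real.sq_sqrt hμ, Real.sq_sqrt (norm_nonneg (ip (M.mulVec w) (M.mulVec w))),
        Real.sqrt_nonneg μ, Real.sqrt_nonneg ‖ip (M.mulVec w) (M.mulVec w)‖]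
    have hips : ip (M.mulVec w) (M.mulVec w) = s⁻¹ • ip (M.mulVec v) (M.mulVec v) := by
      rw [hw, mulVec_smul', ip_smul, ← Real.sqrt_mul_self (le_of_lt hsq)]
      congr 1
      field_simp
      rw [Real.sqrt_sq hsq.le, Real.sq_sqrt (le_of_lt hpos : 0 ≤ s), div_self (hpos.ne' : s ≠ 0)]
    rw [hips, norm_smul, Real.norm_eq_abs,
      abs_of_nonneg (inv_nonneg.mpr (le_of_lt hpos))] at h2
    calc ‖ip (M.mulVec v) (M.mulVec v)‖ = s * (s⁻¹ * ‖ip (M.mulVec v) (M.mulVec v)‖) := by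
          field_simp
          rw [mul_div_assoc, div_self (hpos.ne' : s ≠ 0), mul_one]
      _ ≤ s * μ := by
          refine mul_le_mul_of_nonneg_left ?_ (le_of_lt hpos)
          simpa using h2
      _ = μ * s := mul_comm _ _

end QM

namespace QM

variable {B : Type*} [CStarAlgebra B] [PartialOrder B] [StarOrderedRing B] {n m : ℕ}

lemma ip_adj (M : Matrix (Fin m) (Fin n) B) (u : Fin m → B) (v : Fin n → B) :
    ip (M.conjTranspose.mulVec u) v = ip u (M.mulVec v) := by
  simp only [ip, Matrix.mulVec, dotProduct, Matrix.conjTranspose_apply, star_sum,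
    star_mul, star_star, Finset.sum_mul, Finset.mul_sum, mul_assoc]
  exact Finset.sum_comm

/-- Gram element of the two rows -/
lemma rowGram_nonneg (f : Fin n → B) : (0:B) ≤ ∑ i, f i * star (f i) :=
  Finset.sum_nonneg fun i _ => mul_star_self_nonneg (f i)

lemma rowGram_isSelfAdjoint (f : Fin n → B) : IsSelfAdjoint (∑ i, f i * star (f i)) :=
  IsSelfAdjoint.of_nonneg (rowGram_nonneg f)

lemma ip_star_row (f : Fin n → B) (v : Fin n → B) :
    ip (fun i => star (f i)) v = ∑ i, f i * v i := by
  simp [ip]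

lemma ip_star_row_self (f : Fin n → B) :
    ip (fun i => star (f i)) (fun i => star (f i)) = ∑ i, f i * star (f i) := by
  simp [ip]

/-- Upper bound for a general `m × n` matrix norm via a single-row type bound:
  for 1×n matrices. -/
lemma row_norm_le (M : Matrix (Fin 1) (Fin n) B) :
    cstarMatrixNorm M ≤ Real.sqrt ‖∑ i, M 0 i * star (M 0 i)‖ := by
  set Q := ∑ i, M 0 i * star (M 0 i) with hQ
  refine cstarMatrixNorm_le M fun v hv => ?_
  have h0 : M.mulVec v 0 = ip (fun i => star (M 0 i)) v := by
    rw [ip_star_row]; rfl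
  have h1 : ip (M.mulVec v) (M.mulVec v) = star (M.mulVec v 0) * (M.mulVec v 0) := by
    simp [ip, Fin.sum_univ_one]
  rw [h1, h0, CStarRing.norm_star_mul_self]
  have := cs_norm (fun i => star (M 0 i)) v
  rw [ip_star_row_self, ← hQ] at this
  calc ‖ip (fun i => star (M 0 i)) v‖ * ‖ip (fun i => star (M 0 i)) v‖
      ≤ (Real.sqrt ‖Q‖ * Real.sqrt ‖ip v v‖) * (Real.sqrt ‖Q‖ * Real.sqrt ‖ip v v‖) := by
        exact mul_le_mul this this (norm_nonneg _) (by positivity)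
    _ = ‖Q‖ * ‖ip v v‖ := by
        rw [mul_mul_mul_comm, Real.mul_self_sqrt (norm_nonneg _),
          Real.mul_self_sqrt (norm_nonneg _)]
    _ ≤ ‖Q‖ * 1 := by gcongr
    _ = ‖Q‖ := mul_one _

/-- The canonical witness vector for a row `f`. -/
lemma witness_spec (f : Fin n → B) (hQ : 0 < ‖∑ i, f i * star (f i)‖) :
    ∃ v : Fin n → B, ‖ip v v‖ ≤ 1 ∧
      ∑ i, f i * v i = (Real.sqrt ‖∑ i, f i * star (f i)‖)⁻¹ • (∑ i, f i * star (f i)) := by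
  set Q := ∑ i, f i * star (f i) with hQdef
  set c : ℝ := (Real.sqrt ‖Q‖)⁻¹ with hc
  refine ⟨c • (fun i => star (f i)), ?_, ?_⟩
  · rw [ip_smul, norm_smul]
    rw [ip_star_row_self, ← hQdef]
    have : c * c = ‖Q‖⁻¹ := by
      rw [hc, ← mul_inv, Real.mul_self_sqrt (norm_nonneg _)]
    rw [this, Real.norm_eq_abs, abs_of_nonneg (inv_nonneg.mpr (norm_nonneg _))]
    rw [inv_mul_cancel₀ (ne_of_gt hQ)]
  · have : ∀ i, f i * (c • (fun j => star (f j))) i = c • (f i * star (f i)) := fun i => by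
      simp [mul_smul_comm]
    rw [Finset.sum_congr rfl fun i _ => this i, ← Finset.smul_sum, ← hQdef]

/-- norm of the scaled square: value of the witness. -/
lemma witness_value {Q : B} (hQ0 : 0 ≤ Q) (hQ : 0 < ‖Q‖) :
    ‖star ((Real.sqrt ‖Q‖)⁻¹ • Q) * ((Real.sqrt ‖Q‖)⁻¹ • Q)‖ = ‖Q‖ := by
  have hsa : star Q = Q := IsSelfAdjoint.of_nonneg hQ0
  rw [star_smul, star_trivial, hsa, smul_mul_smul_comm, ← mul_inv,
    Real.mul_self_sqrt (norm_nonneg _), norm_smul, Real.norm_eq_abs,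
    abs_of_nonneg (inv_nonneg.mpr (norm_nonneg _))]
  have h2 : ‖Q * Q‖ = ‖Q‖ * ‖Q‖ := by
    rw [← CStarRing.norm_star_mul_self (x := Q), hsa]
  rw [h2]
  field_simp

end QM

namespace QM

variable {B : Type*} [CStarAlgebra B] [PartialOrder B] [StarOrderedRing B] {n m : ℕ}

/-- le from sq: if `f*f ≤ K*f` with `f ≥ 0`, `K ≥ 0` then `f ≤ K`. -/
private lemma le_of_sq_le_mul {f K : ℝ} (hf : 0 ≤ f) (hK : 0 ≤ K) (h : f * f ≤ K * f) :
    f ≤ K := by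
  rcases eq_or_lt_of_le hf with h0 | h0
  · linarith
  · exact le_of_mul_le_mul_right (by linarith [h]) h0

/-- If the two rows of a `2 × n` matrix are orthogonal (`∑ r i * star (s i) = 0`) and the
first row's gram has norm at most that of the second, the matrix norm is at most `√‖Q‖`. -/
lemma two_row_le (M : Matrix (Fin 2) (Fin n) B)
    (hc : ∑ i, M 0 i * star (M 1 i) = 0)
    (hPQ : ‖∑ i, M 0 i * star (M 0 i)‖ ≤ ‖∑ i, M 1 i * star (M 1 i)‖) :
    cstarMatrixNorm M ≤ Real.sqrt ‖∑ i, M 1 i * star (M 1 i)‖ := by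
  set P := ∑ i, M 0 i * star (M 0 i) with hP
  set Q := ∑ i, M 1 i * star (M 1 i) with hQ
  refine cstarMatrixNorm_le M fun v hv => ?_
  set u := M.mulVec v with hu
  set a := u 0 with ha
  set w := u 1 with hw
  set g := M.conjTranspose.mulVec u with hg
  -- `ip u u`
  have hipu : ip u u = star a * a + star w * w := by
    simp [ip, Fin.sum_univ_two, ha, hw]
  -- `g` entrywise
  have hgi : ∀ i, g i = star (M 0 i) * a + star (M 1 i) * w := fun i => by
    simp [hg, Matrix.mulVec, dotProduct, Fin.sum_univ_two, Matrix.conjTranspose_apply,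
      ha, hw]
  -- the other orthogonality
  have hc' : ∑ i, M 1 i * star (M 0 i) = 0 := by
    have := congrArg star hc
    simpa [star_sum] using this
  -- compute ip g g
  have hipg : ip g g = star a * P * a + star w * Q * w := by
    have h1 : ∀ i, star (g i) * g i
        = star a * (M 0 i * star (M 0 i)) * a + star a * (M 0 i * star (M 1 i)) * w
          + star w * (M 1 i * star (M 0 i)) * a + star w * (M 1 i * star (M 1 i)) * w := by
      intro i
      rw [hgi i]
      simp only [star_add, star_mul, star_star]
      noncomm_ring
    calc ip g g = ∑ i, (star a * (M 0 i * star (M 0 i)) * a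
          + star a * (M 0 i * star (M 1 i)) * w
          + star w * (M 1 i * star (M 0 i)) * a
          + star w * (M 1 i * star (M 1 i)) * w) := Finset.sum_congr rfl fun i _ => h1 i
      _ = star a * P * a + star a * (∑ i, M 0 i * star (M 1 i)) * w
          + star w * (∑ i, M 1 i * star (M 0 i)) * a + star w * Q * w := by
          simp only [Finset.sum_add_distrib, Finset.mul_sum, Finset.sum_mul, hP, hQ]
      _ = star a * P * a + star w * Q * w := by rw [hc, hc']; simp
  -- bound ip g g
  have hb1 : star a * P * a ≤ ‖P‖ • (star a * a) :=
    CStarAlgebra.star_left_conjugate_le_norm_smul (rowGram_isSelfAdjoint _)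
  have hb2 : star w * Q * w ≤ ‖Q‖ • (star w * w) :=
    CStarAlgebra.star_left_conjugate_le_norm_smul (rowGram_isSelfAdjoint _)
  have hb3 : ‖P‖ • (star a * a) ≤ ‖Q‖ • (star a * a) :=
    smul_le_smul_of_nonneg_right hPQ (star_mul_self_nonneg a)
  have hbound : ip g g ≤ ‖Q‖ • ip u u := by
    rw [hipg, hipu, smul_add]
    exact add_le_add (hb1.trans hb3) hb2
  have hnormg : ‖ip g g‖ ≤ ‖Q‖ * ‖ip u u‖ := by
    calc ‖ip g g‖ ≤ ‖‖Q‖ • ip u u‖ :=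
          CStarAlgebra.norm_le_norm_of_nonneg_of_le (ip_self_nonneg g) hbound
      _ = ‖Q‖ * ‖ip u u‖ := by
          rw [norm_smul, Real.norm_eq_abs, abs_of_nonneg (norm_nonneg _)]
  -- Cauchy-Schwarz step
  set f := ‖ip u u‖ with hf
  have key : f ≤ Real.sqrt ‖ip g g‖ * Real.sqrt ‖ip v v‖ := by
    have h2 : ip g v = ip u u := by rw [hg, ip_adj, ← hu]
    calc f = ‖ip g v‖ := by rw [h2]
      _ ≤ Real.sqrt ‖ip g g‖ * Real.sqrt ‖ip v v‖ := cs_norm g v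
  have key2 : f ≤ Real.sqrt (‖Q‖ * f) := by
    refine key.trans ?_
    calc Real.sqrt ‖ip g g‖ * Real.sqrt ‖ip v v‖
        ≤ Real.sqrt (‖Q‖ * f) * Real.sqrt 1 :=
          mul_le_mul (Real.sqrt_le_sqrt hnormg) (Real.sqrt_le_sqrt hv)
            (Real.sqrt_nonneg _) (Real.sqrt_nonneg _)
      _ = Real.sqrt (‖Q‖ * f) := by rw [Real.sqrt_one, mul_one]
  -- conclude f ≤ ‖Q‖
  have hfQ : f ≤ ‖Q‖ := by
    have hsq : f * f ≤ ‖Q‖ * f := by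
      have := mul_le_mul key2 key2 (norm_nonneg _) (Real.sqrt_nonneg _)
      rwa [Real.mul_self_sqrt (by positivity)] at this
    exact le_of_sq_le_mul (norm_nonneg _) (norm_nonneg _) hsq
  exact hfQ

/-- bound for the adjoint from the global bound -/
lemma adj_bound (M : Matrix (Fin m) (Fin n) B) {μ : ℝ} (hμ : 0 ≤ μ)
    (h : ∀ v : Fin n → B, ‖ip (M.mulVec v) (M.mulVec v)‖ ≤ μ * ‖ip v v‖)
    (u : Fin m → B) :
    ‖ip (M.conjTranspose.mulVec u) (M.conjTranspose.mulVec u)‖ ≤ μ * ‖ip u u‖ := by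
  set g := M.conjTranspose.mulVec u with hg
  set t := ‖ip g g‖ with ht
  have h1 : ip g g = ip u (M.mulVec g) := by rw [hg, ip_adj]
  have h2 : t ≤ Real.sqrt ‖ip u u‖ * Real.sqrt ‖ip (M.mulVec g) (M.mulVec g)‖ := by
    calc t = ‖ip u (M.mulVec g)‖ := by rw [ht, h1]
      _ ≤ _ := cs_norm u (M.mulVec g)
  have h3 : t ≤ Real.sqrt ‖ip u u‖ * Real.sqrt (μ * t) := by
    refine h2.trans ?_
    gcongr
    exact h g
  have hsq : t * t ≤ (μ * ‖ip u u‖) * t := by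
    have := mul_le_mul h3 h3 (norm_nonneg _) (by positivity)
    rw [mul_mul_mul_comm, Real.mul_self_sqrt (norm_nonneg _),
      Real.mul_self_sqrt (by positivity)] at this
    calc t * t ≤ ‖ip u u‖ * (μ * t) := this
      _ = (μ * ‖ip u u‖) * t := by ring
  exact le_of_sq_le_mul (norm_nonneg _) (by positivity) hsq

end QM

namespace QM

variable {B : Type*} [CStarAlgebra B] [PartialOrder B] [StarOrderedRing B]

lemma norm_smul_one_add_le [Nontrivial B] {S : B} (hS : 0 ≤ S) {μ : ℝ} (hμ : 0 ≤ μ) :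
    μ + ‖S‖ ≤ ‖μ • (1 : B) + S‖ := by
  have h1 : ‖S‖ ∈ spectrum ℝ S := CStarAlgebra.norm_mem_spectrum_of_nonneg hS
  have h2 : μ + ‖S‖ ∈ spectrum ℝ (algebraMap ℝ B μ + S) := by
    rw [← spectrum.singleton_add_eq]
    exact Set.add_mem_add rfl h1
  have h3 := spectrum.norm_le_norm_of_mem h2
  rw [Real.norm_eq_abs, abs_of_nonneg (by positivity)] at h3
  rwa [Algebra.algebraMap_eq_smul_one] at h3

lemma norm_ge_of_le_of_nonneg {a b : B} (ha : 0 ≤ a) (hab : a ≤ b) : ‖a‖ ≤ ‖b‖ :=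
  CStarAlgebra.norm_le_norm_of_nonneg_of_le ha hab

/-- `4 ≤ ‖Q‖` when `(4:B) ≤ Q`. -/
lemma four_le_norm [Nontrivial B] {Q : B} (h : (4 : B) ≤ Q) : (4:ℝ) ≤ ‖Q‖ := by
  have h4 : ((4:B)) = algebraMap ℝ B 4 := by
    rw [map_ofNat]
  have h0 : (0:B) ≤ 4 := by
    have h22 : (2:B) * 2 = 4 := by norm_num
    rw [← h22]
    simpa using star_mul_self_nonneg (2:B)
  have := norm_ge_of_le_of_nonneg h0 h
  rw [h4, norm_algebraMap] at this
  simpa using this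

lemma eq_zero_of_norm_star_mul_self_eq_zero {c : B} (h : ‖star c * c‖ = 0) : c = 0 := by
  have := CStarRing.norm_star_mul_self (x := c)
  rw [h] at this
  have : ‖c‖ = 0 := by nlinarith [norm_nonneg c]
  simpa using this

end QM

namespace QM

variable {B : Type*} [CStarAlgebra B] [PartialOrder B] [StarOrderedRing B]

lemma cstarMatrixNorm_of_subsingleton [Subsingleton B] {m n : ℕ}
    (M : Matrix (Fin m) (Fin n) B) : cstarMatrixNorm M = 0 := by
  rw [cstarMatrixNorm_eq]
  have h : SM M = {0} := by
    refine Set.eq_singleton_iff_unique_mem.mpr ⟨zero_mem_SM M, ?_⟩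
    rintro r ⟨v, hv, rfl⟩
    have : ip (M.mulVec v) (M.mulVec v) = 0 := Subsingleton.elim _ _
    rw [this, norm_zero, Real.sqrt_zero]
  rw [h, csSup_singleton]

variable (x y z b : B)

lemma rowGram_R : ∑ i, (!![(2 : B), x, z, b]) 0 i * star ((!![(2 : B), x, z, b]) 0 i)
    = 4 + x * star x + z * star z + b * star b := by
  simp [Fin.sum_univ_four, add_assoc]
  norm_num

lemma rowGram_M1 :
    ∑ i, (!![(0:B), y, 1, 0; 2, x, z, b]) 1 i * star ((!![(0:B), y, 1, 0; 2, x, z, b]) 1 i)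
      = 4 + x * star x + z * star z + b * star b := by
  simp [Fin.sum_univ_four, add_assoc]
  norm_num

lemma rowGram_M0 :
    ∑ i, (!![(0:B), y, 1, 0; 2, x, z, b]) 0 i * star ((!![(0:B), y, 1, 0; 2, x, z, b]) 0 i)
      = y * star y + 1 := by
  simp [Fin.sum_univ_four]

lemma cross_M :
    ∑ i, (!![(0:B), y, 1, 0; 2, x, z, b]) 0 i * star ((!![(0:B), y, 1, 0; 2, x, z, b]) 1 i)
      = y * star x + star z := by
  simp [Fin.sum_univ_four]

lemma Q_nonneg' : (0:B) ≤ 4 + x * star x + z * star z + b * star b := by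
  have h22 : (2:B) * 2 = 4 := by norm_num
  have h4 : (0:B) ≤ 4 := by rw [← h22]; simpa using star_mul_self_nonneg (2:B)
  have := mul_star_self_nonneg x
  have := mul_star_self_nonneg z
  have := mul_star_self_nonneg b
  positivity

lemma four_le_Q : (4:B) ≤ 4 + x * star x + z * star z + b * star b := by
  have h1 : (0:B) ≤ x * star x + z * star z + b * star b := by
    have := mul_star_self_nonneg x
    have := mul_star_self_nonneg z
    have := mul_star_self_nonneg b
    positivity
  calc (4:B) = 4 + 0 := by rw [add_zero]
    _ ≤ 4 + (x * star x + z * star z + b * star b) := by gcongr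
    _ = 4 + x * star x + z * star z + b * star b := by abel

/-- Forward direction key: if `z = -(x * star y)` and `‖y‖ ≤ 1` then `C(x,y,z)` holds. -/
lemma condC_of_eq [Nontrivial B] {x y z : B} (hy : ‖y‖ ≤ 1) (hz : z = -(x * star y)) :
    CondC x y z := by
  intro b
  set M : Matrix (Fin 2) (Fin 4) B := !![0, y, 1, 0; 2, x, z, b] with hM
  set R : Matrix (Fin 1) (Fin 4) B := !![(2 : B), x, z, b] with hR
  set Q : B := 4 + x * star x + z * star z + b * star b with hQ
  set P : B := y * star y + 1 with hP
  have hQ0 : (0:B) ≤ Q := Q_nonneg' x z b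
  have hQ4 : (4:ℝ) ≤ ‖Q‖ := four_le_norm (four_le_Q x z b)
  have hQpos : (0:ℝ) < ‖Q‖ := by linarith
  have hPle : ‖P‖ ≤ 2 := by
    rw [hP]
    calc ‖y * star y + 1‖ ≤ ‖y * star y‖ + ‖(1:B)‖ := norm_add_le _ _
      _ ≤ ‖y‖ * ‖star y‖ + 1 := by rw [norm_one]; gcongr; exact norm_mul_le _ _
      _ ≤ 1 * 1 + 1 := by rw [norm_star]; gcongr <;> exact hy
      _ = 2 := by norm_num
  have hPQ : ‖P‖ ≤ ‖Q‖ := hPle.trans (by linarith)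
  have hcross : ∑ i, M 0 i * star (M 1 i) = 0 := by
    rw [hM, cross_M, hz]
    simp [star_neg, star_mul]
  -- upper bounds
  have hMle : cstarMatrixNorm M ≤ Real.sqrt ‖Q‖ := by
    have := two_row_le M hcross (by rw [hM, rowGram_M0, rowGram_M1, ← hP, ← hQ]; exact hPQ)
    rwa [hM, rowGram_M1, ← hQ] at this
  have hRle : cstarMatrixNorm R ≤ Real.sqrt ‖Q‖ := by
    have := row_norm_le R
    rwa [hR, rowGram_R, ← hQ] at this
  -- witness
  obtain ⟨v, hv1, hvsum⟩ := witness_spec (fun i => R 0 i) (by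
    rw [show ∑ i, R 0 i * star (R 0 i) = Q by rw [hR, rowGram_R, hQ]]
    exact hQpos)
  rw [show ∑ i, R 0 i * star (R 0 i) = Q by rw [hR, rowGram_R, hQ]] at hvsum
  have hwR : R.mulVec v 0 = (Real.sqrt ‖Q‖)⁻¹ • Q := by
    rw [show R.mulVec v 0 = ∑ i, R 0 i * v i from rfl, hvsum]
  have hwM : M.mulVec v 1 = (Real.sqrt ‖Q‖)⁻¹ • Q := by
    rw [show M.mulVec v 1 = ∑ i, M 1 i * v i from rfl, ← hvsum]
    have hrow : ∀ i, M 1 i = R 0 i := by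
      intro i
      fin_cases i <;> rfl
    exact Finset.sum_congr rfl fun i _ => by rw [hrow i]
  have hval : ‖star ((Real.sqrt ‖Q‖)⁻¹ • Q) * ((Real.sqrt ‖Q‖)⁻¹ • Q)‖ = ‖Q‖ :=
    witness_value hQ0 hQpos
  have hRge : Real.sqrt ‖Q‖ ≤ cstarMatrixNorm R := by
    have h1 := le_cstarMatrixNorm R v hv1
    have h2 : ip (R.mulVec v) (R.mulVec v) = star (R.mulVec v 0) * (R.mulVec v 0) := by
      simp [ip, Fin.sum_univ_one]
    rw [h2, hwR, hval] at h1
    exact h1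
  have hMge : Real.sqrt ‖Q‖ ≤ cstarMatrixNorm M := by
    have h1 := le_cstarMatrixNorm M v hv1
    have h2 : ip (M.mulVec v) (M.mulVec v)
        = star (M.mulVec v 0) * (M.mulVec v 0) + star (M.mulVec v 1) * (M.mulVec v 1) := by
      simp [ip, Fin.sum_univ_two]
    have h3 : ‖star (M.mulVec v 1) * (M.mulVec v 1)‖ ≤ ‖ip (M.mulVec v) (M.mulVec v)‖ := by
      refine norm_ge_of_le_of_nonneg (star_mul_self_nonneg _) ?_
      rw [h2]
      exact le_add_of_nonneg_left (star_mul_self_nonneg _)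
    rw [hwM, hval] at h3
    exact (Real.sqrt_le_sqrt h3).trans h1
  exact le_antisymm (hMle.trans hRge) (hRle.trans hMge)

end QM

namespace QM

variable {B : Type*} [CStarAlgebra B] [PartialOrder B] [StarOrderedRing B]

private lemma expand2 (p q r s : B) (t : ℝ) :
    (t • p + r) * (t • q + s) = (t*t) • (p*q) + t • (p*s) + t • (r*q) + r*s := by
  simp only [add_mul, mul_add, smul_mul_assoc, mul_smul_comm, smul_smul, smul_add]
  abel

private lemma scalar_endgame {cc K μ : ℝ} (hcc : 0 ≤ cc) (hK : 0 ≤ K) (hμ : 0 ≤ μ)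
    (h : ∀ t : ℝ, 0 < t → 2 * t * cc ≤ t * t * (μ * cc + K)) : cc = 0 := by
  by_contra hne
  have hpos : 0 < cc := lt_of_le_of_ne hcc (Ne.symm hne)
  have hD0 : 0 ≤ μ * cc + K := by positivity
  have ht0 : 0 < cc / (μ * cc + K + 1) := by positivity
  have hk := h _ ht0
  have hDD : (cc / (μ * cc + K + 1)) * (μ * cc + K + 1) = cc := by field_simp
  nlinarith [hk, hpos, hD0, ht0, hDD]

/-- Backward direction key: `C(x,y,z)` forces `z = -(x * star y)`. -/
lemma eq_of_condC [Nontrivial B] {x y z : B} (hC : CondC x y z) : z = -(x * star y) := by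
  have hQ₀0 : (0:B) ≤ 4 + x * star x + z * star z := by
    have h22 : (2:B) * 2 = 4 := by norm_num
    have h4 : (0:B) ≤ 4 := by rw [← h22]; simpa using star_mul_self_nonneg (2:B)
    have := mul_star_self_nonneg x
    have := mul_star_self_nonneg z
    positivity
  obtain ⟨μ, hμdef⟩ : ∃ μ : ℝ, μ = ‖(4:B) + x * star x + z * star z‖ := ⟨_, rfl⟩
  have hμ0 : (0:ℝ) ≤ μ := hμdef ▸ norm_nonneg _
  have hle : (4:B) + x * star x + z * star z ≤ μ • (1:B) := by
    have := IsSelfAdjoint.le_algebraMap_norm_self (IsSelfAdjoint.of_nonneg hQ₀0)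
    rw [Algebra.algebraMap_eq_smul_one] at this
    rwa [hμdef]
  have hsub : (0:B) ≤ μ • (1:B) - (4 + x * star x + z * star z) := sub_nonneg.mpr hle
  obtain ⟨b, hbdef⟩ : ∃ b : B, b = CFC.sqrt (μ • (1:B) - (4 + x * star x + z * star z)) :=
    ⟨_, rfl⟩
  have hb0 : (0:B) ≤ b := hbdef ▸ CFC.sqrt_nonneg _
  have hbsa : star b = b := IsSelfAdjoint.of_nonneg hb0
  have hbb : b * star b = μ • (1:B) - (4 + x * star x + z * star z) := by
    rw [hbsa, hbdef, CFC.sqrt_mul_sqrt_self _ hsub]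
  have hbb2 : star b * b = μ • (1:B) - (4 + x * star x + z * star z) := by
    rw [hbsa, ← hbb, hbsa]
  have hQb : (4:B) + x * star x + z * star z + b * star b = μ • (1:B) := by
    rw [hbb]; abel
  have hμ1 : ‖μ • (1:B)‖ = μ := by
    rw [norm_smul, norm_one, mul_one, Real.norm_eq_abs, abs_of_nonneg hμ0]
  -- norm bounds
  have hRle : cstarMatrixNorm (!![(2:B), x, z, b]) ≤ Real.sqrt μ := by
    have h := row_norm_le (!![(2:B), x, z, b])
    rwa [rowGram_R, hQb, hμ1] at h
  have hMle : cstarMatrixNorm (!![(0:B), y, 1, 0; 2, x, z, b]) ≤ Real.sqrt μ := by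
    rw [show (!![(0:B), y, 1, 0; 2, x, z, b]) = !![0, y, 1, 0; 2, x, z, b] from rfl, hC b]
    exact hRle
  have hglob := ip_mulVec_le_of_norm_le (!![(0:B), y, 1, 0; 2, x, z, b]) hμ0 hMle
  have hadj := adj_bound (!![(0:B), y, 1, 0; 2, x, z, b]) hμ0 hglob
  obtain ⟨cE, hcEdef⟩ : ∃ cE : B, cE = y * star x + star z := ⟨_, rfl⟩
  have hstarcE : star cE = x * star y + z := by
    rw [hcEdef]
    simp [star_add, star_mul, star_star]
  have hA0 : (0:B) ≤ star cE * cE := star_mul_self_nonneg cE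
  have hKsa : IsSelfAdjoint (star cE * (y * star y + 1) * cE) := by
    rw [IsSelfAdjoint]
    simp only [star_mul, star_add, star_one, star_star]
    rw [mul_assoc]
  -- the key inequality for each positive t
  have key : ∀ t : ℝ, 0 < t → 2 * t * ‖star cE * cE‖
      ≤ t * t * (μ * ‖star cE * cE‖ + ‖star cE * (y * star y + 1) * cE‖) := by
    intro t ht
    obtain ⟨u, hu⟩ : ∃ u : Fin 2 → B, u = ![t • cE, 1] := ⟨_, rfl⟩
    obtain ⟨g, hgdef⟩ :
        ∃ g : Fin 4 → B, g = (!![(0:B), y, 1, 0; 2, x, z, b]).conjTranspose.mulVec u :=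
      ⟨_, rfl⟩
    have hg0 : g 0 = 2 := by
      simp [hgdef, hu, Matrix.mulVec, dotProduct, Fin.sum_univ_two,
        Matrix.conjTranspose_apply]
    have hg1 : g 1 = star y * (t • cE) + star x := by
      simp [hgdef, hu, Matrix.mulVec, dotProduct, Fin.sum_univ_two,
        Matrix.conjTranspose_apply]
    have hg2 : g 2 = t • cE + star z := by
      simp [hgdef, hu, Matrix.mulVec, dotProduct, Fin.sum_univ_two,
        Matrix.conjTranspose_apply]
    have hg3 : g 3 = b := by
      simp [hgdef, hu, Matrix.mulVec, dotProduct, Fin.sum_univ_two,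
        Matrix.conjTranspose_apply, hbsa]
    -- algebraic identities
    have hA1 : (star cE * y) * star x + star cE * star z = star cE * cE := by
      conv_lhs => rw [mul_assoc, ← mul_add]
      rw [← hcEdef]
    have hA2 : x * (star y * cE) + z * cE = star cE * cE := by
      rw [← mul_assoc, ← add_mul, ← hstarcE]
    have hK' : (star cE * y) * (star y * cE) + star cE * cE
        = star cE * (y * star y + 1) * cE := by
      noncomm_ring
    have hst1 : star (star y * (t • cE) + star x) = t • (star cE * y) + x := by
      simp [star_add, star_mul, star_star, star_smul, smul_mul_assoc]
    have hst2 : star (t • cE + star z) = t • star cE + z := by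
      simp [star_add, star_smul, star_star]
    have h2' : star (2:B) * 2 = 4 := by
      have hs2 : star (2:B) = 2 := by simp
      rw [hs2]; norm_num
    have hgg : ip g g = μ • (1:B) + (2*t) • (star cE * cE)
        + (t*t) • (star cE * (y * star y + 1) * cE) := by
      rw [ip, Fin.sum_univ_four, hg0, hg1, hg2, hg3, hbb2, hst1, hst2, h2',
        show star y * (t • cE) = t • (star y * cE) from mul_smul_comm _ _ _,
        expand2, expand2]
      calc (4:B) + ((t*t) • ((star cE * y) * (star y * cE)) + t • ((star cE * y) * star x)
            + t • (x * (star y * cE)) + x * star x)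
          + ((t*t) • (star cE * cE) + t • (star cE * star z) + t • (z * cE) + z * star z)
          + (μ • (1:B) - (4 + x * star x + z * star z))
          = μ • (1:B) + (t • ((star cE * y) * star x + star cE * star z)
              + t • (x * (star y * cE) + z * cE))
            + (t*t) • ((star cE * y) * (star y * cE) + star cE * cE) := by
            module
        _ = μ • (1:B) + (t • (star cE * cE) + t • (star cE * cE))
            + (t*t) • (star cE * (y * star y + 1) * cE) := by
            rw [hA1, hA2, hK']
        _ = μ • (1:B) + (2*t) • (star cE * cE)
            + (t*t) • (star cE * (y * star y + 1) * cE) := by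
            module
    have huu : ‖ip u u‖ ≤ 1 + t * t * ‖star cE * cE‖ := by
      have h1 : ip u u = (t*t) • (star cE * cE) + 1 := by
        rw [ip, Fin.sum_univ_two]
        simp only [hu, Matrix.cons_val_zero, Matrix.cons_val_one, Matrix.head_cons,
          star_smul, star_trivial, smul_mul_smul_comm, star_one, one_mul]
      rw [h1]
      calc ‖(t*t) • (star cE * cE) + 1‖ ≤ ‖(t*t) • (star cE * cE)‖ + ‖(1:B)‖ := norm_add_le _ _
        _ = t * t * ‖star cE * cE‖ + 1 := by
            rw [norm_one, norm_smul, Real.norm_eq_abs, abs_of_nonneg (by positivity)]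
        _ = 1 + t * t * ‖star cE * cE‖ := by ring
    -- assemble
    have hadj' : ‖ip g g‖ ≤ μ * ‖ip u u‖ := by
      rw [hgdef]
      exact hadj u
    have hS0 : (0:B) ≤ (2*t) • (star cE * cE) := smul_nonneg (by positivity) hA0
    have hlow : μ + ‖(2*t) • (star cE * cE)‖ ≤ ‖μ • (1:B) + (2*t) • (star cE * cE)‖ :=
      norm_smul_one_add_le hS0 hμ0
    have htri : ‖μ • (1:B) + (2*t) • (star cE * cE)‖
        ≤ ‖ip g g‖ + ‖(t*t) • (star cE * (y * star y + 1) * cE)‖ := by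
      have heq : μ • (1:B) + (2*t) • (star cE * cE)
          = ip g g - (t*t) • (star cE * (y * star y + 1) * cE) := by rw [hgg]; abel
      rw [heq]
      exact norm_sub_le _ _
    have hnk : ‖(t*t) • (star cE * (y * star y + 1) * cE)‖
        = t * t * ‖star cE * (y * star y + 1) * cE‖ := by
      rw [norm_smul, Real.norm_eq_abs, abs_of_nonneg (by positivity)]
    have hna : ‖(2*t) • (star cE * cE)‖ = 2 * t * ‖star cE * cE‖ := by
      rw [norm_smul, Real.norm_eq_abs, abs_of_nonneg (by positivity)]
    have hfin : μ + 2 * t * ‖star cE * cE‖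
        ≤ μ * (1 + t * t * ‖star cE * cE‖) + t * t * ‖star cE * (y * star y + 1) * cE‖ := by
      calc μ + 2 * t * ‖star cE * cE‖ = μ + ‖(2*t) • (star cE * cE)‖ := by rw [hna]
        _ ≤ ‖μ • (1:B) + (2*t) • (star cE * cE)‖ := hlow
        _ ≤ ‖ip g g‖ + ‖(t*t) • (star cE * (y * star y + 1) * cE)‖ := htri
        _ ≤ μ * ‖ip u u‖ + t * t * ‖star cE * (y * star y + 1) * cE‖ := by
            rw [hnk]; gcongr
        _ ≤ μ * (1 + t * t * ‖star cE * cE‖)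
            + t * t * ‖star cE * (y * star y + 1) * cE‖ := by gcongr
    nlinarith [hfin]
  -- conclude
  have hA : ‖star cE * cE‖ = 0 :=
    scalar_endgame (norm_nonneg _) (norm_nonneg _) hμ0 key
  have hcE0 : cE = 0 := eq_zero_of_norm_star_mul_self_eq_zero hA
  rw [hcEdef] at hcE0
  have hz : star z = -(y * star x) := eq_neg_of_add_eq_zero_right hcE0
  calc z = star (star z) := (star_star z).symm
    _ = star (-(y * star x)) := by rw [hz]
    _ = -(x * star y) := by simp [star_neg, star_mul, star_star]

end QM

/-- Corollary 6.2 (3): for `x ∈ A`, `A x A ⊆ A` iff for every contraction `y` with `y* ∈ A`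
there is `z` with `A z ⊆ A` such that `C(x,y,z)` holds. -/
theorem quasi_mult_iff {B : Type*} [CStarAlgebra B] (A : Submodule ℂ B) (x : B) (hx : x ∈ A) :
    (∀ a ∈ A, ∀ c ∈ A, a * x * c ∈ A) ↔
      (∀ y : B, star y ∈ A → ‖y‖ ≤ 1 →
        ∃ z : B, (∀ a ∈ A, a * z ∈ A) ∧ CondC x y z) := by
  letI := CStarAlgebra.spectralOrder B
  haveI := CStarAlgebra.spectralOrderedRing B
  rcases subsingleton_or_nontrivial B with hB | hB
  · constructor
    · intro _ y _ _
      refine ⟨0, fun a _ => ?_, fun b => ?_⟩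
      · rw [mul_zero]; exact A.zero_mem
      · rw [QM.cstarMatrixNorm_of_subsingleton, QM.cstarMatrixNorm_of_subsingleton]
    · intro _ a _ c _
      have h0 : a * x * c = 0 := Subsingleton.elim _ _
      rw [h0]; exact A.zero_mem
  · constructor
    · intro h y hyA hy1
      refine ⟨-(x * star y), fun a haA => ?_, QM.condC_of_eq hy1 rfl⟩
      have hmem := h a haA (star y) hyA
      have heq : a * -(x * star y) = -(a * x * star y) := by
        rw [mul_neg, ← mul_assoc]
      rw [heq]
      exact A.neg_mem hmem
    · intro h a haA c hcA
      rcases eq_or_ne c 0 with rfl | hc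
      · simpa using A.zero_mem
      · have hc0 : (0:ℝ) < ‖c‖ := norm_pos_iff.mpr hc
        have hC0 : ((‖c‖ : ℂ)) ≠ 0 := by
          simpa using ne_of_gt hc0
        have hsy : star ((‖c‖ : ℂ)⁻¹ • star c) = (‖c‖ : ℂ)⁻¹ • c := by
          rw [star_smul, star_star]
          congr 1
          simp
        obtain ⟨z, hzA, hzC⟩ := h ((‖c‖ : ℂ)⁻¹ • star c)
          (by rw [hsy]; exact A.smul_mem _ hcA)
          (by
            rw [norm_smul, norm_star, norm_inv]
            have hnc : ‖((‖c‖ : ℂ))‖ = ‖c‖ := by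
              simp
            rw [hnc, inv_mul_cancel₀ (ne_of_gt hc0)])
        have hzeq : z = -(x * star ((‖c‖ : ℂ)⁻¹ • star c)) := QM.eq_of_condC hzC
        have h1 : a * z = -((‖c‖ : ℂ)⁻¹ • (a * x * c)) := by
          rw [hzeq, hsy, mul_smul_comm, mul_neg, mul_smul_comm, ← mul_assoc]
        have h2 : a * x * c = (-(‖c‖ : ℂ)) • (a * z) := by
          rw [h1, smul_neg, neg_smul, neg_neg, smul_smul, mul_inv_cancel₀ hC0, one_smul]
        rw [h2]
        exact A.smul_mem _ (hzA a haA)
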